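/- Let G be a finite group and H a non-trivial normal subgroup of G of even order. Then H is a total perfect code in some Cayley graph of G if and only if for every pair of integers a, b with 0 ≤ a ≤ |H| − 1 and 0 ≤ b ≤ |H|, H is an (a,b)-regular set in some Cayley graph of G. -/

import Mathlib

/-- The Cayley graph of a group `G` with connection set `S`:
`x` is adjacent to `y` iff `y * x⁻¹ ∈ S` (symmetrized; for inverse-closed `S`
not containing `1` this is the usual Cayley graph). -/
def cayley {G : Type*} [Group G] (S : Set G) : SimpleGraph G :=
  SimpleGraph.fromRel (fun x y => y * x⁻¹ ∈ S)

/-- `C` is an `(a,b)`-regular set in `Γ`: every vertex in `C` has exactly `a`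
neighbors in `C`, and every vertex outside `C` has exactly `b` neighbors in `C`. -/
def IsRegularSet {V : Type*} (Γ : SimpleGraph V) (C : Set V) (a b : ℕ) : Prop :=
  (∀ v ∈ C, (Γ.neighborSet v ∩ C).ncard = a) ∧
  (∀ v ∉ C, (Γ.neighborSet v ∩ C).ncard = b)

section Aux

variable {G : Type*} [Group G]

lemma mem_of_inv_eq' {D : Set G} (hinv : D⁻¹ = D) {g : G} (hg : g ∈ D) : g⁻¹ ∈ D := by
  rw [← hinv]; simpa using hg

lemma pair_sub' (D : Set G) (hfin : D.Finite) (hinv : D⁻¹ = D) (h2 : 2 ≤ D.ncard) :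
    ∃ P ⊆ D, P⁻¹ = P ∧ P.ncard = 2 := by
  obtain ⟨y, hy⟩ : D.Nonempty := by
    rw [← Set.ncard_pos hfin]; omega
  by_cases hyy : y⁻¹ = y
  · obtain ⟨z, hz, hzy⟩ : ∃ z ∈ D, z ≠ y := by
      by_contra h
      push_neg at h
      have : D = {y} := Set.eq_singleton_iff_unique_mem.2 ⟨hy, h⟩
      rw [this] at h2; simp at h2
    by_cases hzz : z⁻¹ = z
    · refine ⟨{y, z}, ?_, ?_, ?_⟩
      · intro w hw; rcases hw with h | h <;> simp_all
      · rw [Set.inv_insert, Set.inv_singleton, hyy, hzz]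
      · exact Set.ncard_pair (Ne.symm hzy)
    · refine ⟨{z, z⁻¹}, ?_, ?_, ?_⟩
      · intro w hw; rcases hw with h | h
        · simpa [h] using hz
        · simp only [Set.mem_singleton_iff] at h; rw [h]; exact mem_of_inv_eq' hinv hz
      · rw [Set.inv_insert, Set.inv_singleton, inv_inv, Set.pair_comm]
      · exact Set.ncard_pair (Ne.symm hzz)
  · refine ⟨{y, y⁻¹}, ?_, ?_, ?_⟩
    · intro w hw; rcases hw with h | h
      · simpa [h] using hy
      · simp only [Set.mem_singleton_iff] at h; rw [h]; exact mem_of_inv_eq' hinv hy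
    · rw [Set.inv_insert, Set.inv_singleton, inv_inv, Set.pair_comm]
    · exact Set.ncard_pair (Ne.symm hyy)

lemma inv_diff'' (C U : Set G) : (C \ U)⁻¹ = C⁻¹ \ U⁻¹ := by
  ext g; simp [Set.mem_inv]

/-- An inverse-closed finite set containing a self-inverse element has
inverse-closed subsets of every smaller cardinality. -/
lemma inv_closed_subset' (C : Set G) (hfin : C.Finite) (hinv : C⁻¹ = C)
    (hx : ∃ x ∈ C, x⁻¹ = x) : ∀ b ≤ C.ncard, ∃ U ⊆ C, U⁻¹ = U ∧ U.ncard = b := by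
  intro b
  induction b using Nat.strong_induction_on with
  | _ b ih =>
    intro hb
    match b with
    | 0 => exact ⟨∅, by simp, by simp, by simp⟩
    | 1 =>
      obtain ⟨x, hxC, hxx⟩ := hx
      exact ⟨{x}, by simpa using hxC, by simp [hxx], by simp⟩
    | (n+2) =>
      obtain ⟨U, hUC, hUinv, hUcard⟩ := ih n (by omega) (by omega)
      have hUfin : U.Finite := hfin.subset hUC
      have hdfin : (C \ U).Finite := hfin.diff
      have hd2 : 2 ≤ (C \ U).ncard := by
        rw [Set.ncard_diff hUC hUfin, hUcard]; omega
      have hdinv : (C \ U)⁻¹ = C \ U := by rw [inv_diff'', hinv, hUinv]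
      obtain ⟨P, hPD, hPinv, hPcard⟩ := pair_sub' (C \ U) hdfin hdinv hd2
      refine ⟨U ∪ P, ?_, ?_, ?_⟩
      · exact Set.union_subset hUC (hPD.trans Set.diff_subset)
      · rw [Set.union_inv, hUinv, hPinv]
      · rw [Set.ncard_union_eq ?_ hUfin (hfin.subset (hPD.trans Set.diff_subset)),
          hUcard, hPcard]
        exact Set.disjoint_left.2 fun g hg hgP => (hPD hgP).2 hg

lemma cayley_neighborSet' (S : Set G) (hS : S⁻¹ = S) (h1 : (1:G) ∉ S) (v : G) :
    (cayley S).neighborSet v = {y | y * v⁻¹ ∈ S} := by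
  ext y
  simp only [SimpleGraph.mem_neighborSet, cayley, SimpleGraph.fromRel_adj, Set.mem_setOf_eq]
  constructor
  · rintro ⟨hne, h | h⟩
    · exact h
    · have := mem_of_inv_eq' hS h
      simpa using this
  · intro h
    refine ⟨fun hvy => ?_, Or.inl h⟩
    rw [hvy] at h; simp at h; exact h1 h

lemma cayley_count' (S : Set G) (hS : S⁻¹ = S) (h1 : (1:G) ∉ S) (v : G) (C : Set G) :
    ((cayley S).neighborSet v ∩ C).ncard = (S ∩ ((· * v⁻¹) '' C)).ncard := by
  rw [cayley_neighborSet' S hS h1 v]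
  have himg : (· * v⁻¹) '' ({y | y * v⁻¹ ∈ S} ∩ C) = S ∩ ((· * v⁻¹) '' C) := by
    ext z
    simp only [Set.mem_image, Set.mem_inter_iff, Set.mem_setOf_eq]
    constructor
    · rintro ⟨y, ⟨hy, hyC⟩, rfl⟩; exact ⟨hy, y, hyC, rfl⟩
    · rintro ⟨hz, y, hyC, rfl⟩; exact ⟨y, ⟨hz, hyC⟩, rfl⟩
  rw [← himg, Set.ncard_image_of_injective _ (mul_left_injective v⁻¹)]

variable (H : Subgroup G) [H.Normal]

/-- The coset of `G` corresponding to `c : G ⧸ H`, as a subset of `G`. -/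
def Kc (c : G ⧸ H) : Set G := (QuotientGroup.mk : G → G ⧸ H) ⁻¹' {c}

lemma Kc_one : Kc H 1 = (H : Set G) := by
  ext g; simp [Kc, QuotientGroup.eq_one_iff]

lemma Kc_inv (c : G ⧸ H) : (Kc H c)⁻¹ = Kc H c⁻¹ := by
  ext g
  simp only [Set.mem_inv, Kc, Set.mem_preimage, Set.mem_singleton_iff]
  rw [QuotientGroup.mk_inv]
  constructor
  · intro h; rw [← h, inv_inv]
  · intro h; rw [h, inv_inv]

lemma img_H (v : G) :
    (· * v⁻¹) '' (H : Set G) = Kc H ((QuotientGroup.mk v : G ⧸ H)⁻¹) := by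
  ext z
  simp only [Set.mem_image, Kc, Set.mem_preimage, Set.mem_singleton_iff]
  constructor
  · rintro ⟨y, hy, rfl⟩
    rw [QuotientGroup.mk_mul, QuotientGroup.mk_inv, (QuotientGroup.eq_one_iff y).2 hy, one_mul]
  · intro h
    refine ⟨z * v, ?_, by group⟩
    rw [SetLike.mem_coe, ← QuotientGroup.eq_one_iff, QuotientGroup.mk_mul, h]
    group

lemma Kc_ncard (c : G ⧸ H) : (Kc H c).ncard = Nat.card H := by
  obtain ⟨g, rfl⟩ := QuotientGroup.mk_surjective c
  have : Kc H (QuotientGroup.mk g) = (g * ·) '' (H : Set G) := by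
    ext z
    simp only [Kc, Set.mem_preimage, Set.mem_singleton_iff, Set.mem_image]
    rw [QuotientGroup.eq]
    constructor
    · intro h
      have h2 : g⁻¹ * z ∈ H := by
        have := H.inv_mem h; simpa using this
      exact ⟨g⁻¹ * z, h2, by group⟩
    · rintro ⟨y, hy, rfl⟩
      have : ((g*y)⁻¹ * g) = y⁻¹ := by group
      rw [this]; exact H.inv_mem hy
  rw [this, Set.ncard_image_of_injective _ (mul_right_injective g)]
  rw [← Nat.card_coe_set_eq]; rfl

end Aux

theorem stmt6 {G : Type*} [Group G] [Fintype G] (H : Subgroup G) [H.Normal]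
    (hnt : H ≠ ⊥) (heven : Even (Nat.card H)) :
    (∃ S₀ : Set G, S₀⁻¹ = S₀ ∧ (1 : G) ∉ S₀ ∧
        IsRegularSet (cayley S₀) (H : Set G) 1 1) ↔
      (∀ a b : ℕ, a ≤ Nat.card H - 1 → b ≤ Nat.card H →
        ∃ S : Set G, S⁻¹ = S ∧ (1 : G) ∉ S ∧
          IsRegularSet (cayley S) (H : Set G) a b) := by
  classical
  have hq : ∀ v : G, (QuotientGroup.mk v : G ⧸ H) = 1 ↔ v ∈ (H : Set G) := fun v =>
    QuotientGroup.eq_one_iff v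
  constructor
  · rintro ⟨S₀, hS₀inv, hS₀1, hreg⟩ a b ha hb
    -- counting via cosets
    have count0 : ∀ (S : Set G), S⁻¹ = S → (1:G) ∉ S → ∀ v : G,
        ((cayley S).neighborSet v ∩ (H : Set G)).ncard
          = (S ∩ Kc H ((QuotientGroup.mk v : G ⧸ H)⁻¹)).ncard := by
      intro S h1 h2 v
      rw [cayley_count' S h1 h2 v, img_H]
    -- the total perfect code property, coset by coset
    have tpc : ∀ c : G ⧸ H, (S₀ ∩ Kc H c).ncard = 1 := by
      intro c
      obtain ⟨g, rfl⟩ := QuotientGroup.mk_surjective c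
      have hvq : ((QuotientGroup.mk (g⁻¹) : G ⧸ H))⁻¹ = QuotientGroup.mk g := by
        rw [QuotientGroup.mk_inv, inv_inv]
      by_cases hg : g⁻¹ ∈ (H : Set G)
      · have := hreg.1 g⁻¹ hg
        rw [count0 S₀ hS₀inv hS₀1, hvq] at this
        exact this
      · have := hreg.2 g⁻¹ hg
        rw [count0 S₀ hS₀inv hS₀1, hvq] at this
        exact this
    -- every self-inverse coset contains a self-inverse element of S₀
    have fixpt : ∀ c : G ⧸ H, c⁻¹ = c → ∃ x, x ∈ S₀ ∧ x ∈ Kc H c ∧ x⁻¹ = x := by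
      intro c hc
      obtain ⟨x, hx⟩ := Set.ncard_eq_one.mp (tpc c)
      have hxm : x ∈ S₀ ∩ Kc H c := by rw [hx]; exact rfl
      have hsetinv : (S₀ ∩ Kc H c)⁻¹ = S₀ ∩ Kc H c := by
        rw [Set.inter_inv, hS₀inv, Kc_inv, hc]
      have hxi : x⁻¹ ∈ S₀ ∩ Kc H c := mem_of_inv_eq' hsetinv hxm
      rw [hx, Set.mem_singleton_iff] at hxi
      exact ⟨x, hxm.1, hxm.2, hxi⟩
    -- the set U₀ inside H
    obtain ⟨x₀, hx₀S, hx₀H, hx₀inv⟩ := fixpt 1 (by simp)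
    rw [Kc_one] at hx₀H
    have hx₀ne : x₀ ≠ 1 := fun h => hS₀1 (h ▸ hx₀S)
    have hHcard : (H : Set G).ncard = Nat.card H := by
      rw [← Nat.card_coe_set_eq]; rfl
    have hH1inv : ((H : Set G) \ {1})⁻¹ = (H : Set G) \ {1} := by
      ext g
      simp only [Set.mem_inv, Set.mem_diff, Set.mem_singleton_iff, SetLike.mem_coe]
      constructor
      · rintro ⟨h1, h2⟩
        exact ⟨by simpa using H.inv_mem h1, fun h => h2 (by simp [h])⟩
      · rintro ⟨h1, h2⟩
        exact ⟨H.inv_mem h1, fun h => h2 (by simpa using congrArg Inv.inv h)⟩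
    have hH1card : ((H : Set G) \ {1}).ncard = Nat.card H - 1 := by
      rw [Set.ncard_diff (by simpa using H.one_mem) (Set.toFinite _), hHcard]
      simp
    obtain ⟨U₀, hU₀sub, hU₀inv, hU₀card⟩ :=
      inv_closed_subset' ((H : Set G) \ {1}) (Set.toFinite _) hH1inv
        ⟨x₀, ⟨hx₀H, hx₀ne⟩, hx₀inv⟩ a (by rw [hH1card]; exact ha)
    -- a set of representatives of inverse-pairs of cosets
    obtain ⟨n, ⟨e⟩⟩ := Finite.exists_equiv_fin (G ⧸ H)
    set f : G ⧸ H → ℕ := fun c => (e c : ℕ) with hf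
    have hfinj : Function.Injective f := fun c d h =>
      e.injective (Fin.val_injective h)
    set R : Set (G ⧸ H) := {c | f c ≤ f c⁻¹} with hR
    have hRtot : ∀ c : G ⧸ H, c ∈ R ∨ c⁻¹ ∈ R := by
      intro c
      rcases le_total (f c) (f c⁻¹) with h | h
      · exact Or.inl h
      · right; show f c⁻¹ ≤ f c⁻¹⁻¹; rwa [inv_inv]
    have hRself : ∀ c ∈ R, c⁻¹ ∈ R → c⁻¹ = c := by
      intro c h1 h2
      have h2' : f c⁻¹ ≤ f c := by have := h2; rwa [Set.mem_setOf_eq, inv_inv] at this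
      exact hfinj (le_antisymm h2' h1)
    -- choose the pieces of S in each coset
    have keyV : ∀ c : G ⧸ H, ∃ v : Set G,
        c ≠ 1 → v ⊆ Kc H c ∧ v.ncard = b ∧ (c⁻¹ = c → v⁻¹ = v) := by
      intro c
      by_cases h1 : c = 1
      · exact ⟨∅, fun h => absurd h1 h⟩
      by_cases hc : c⁻¹ = c
      · obtain ⟨x, _, hxK, hxx⟩ := fixpt c hc
        obtain ⟨U, hU1, hU2, hU3⟩ :=
          inv_closed_subset' (Kc H c) (Set.toFinite _) (by rw [Kc_inv, hc])
            ⟨x, hxK, hxx⟩ b (by rw [Kc_ncard]; exact hb)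
        exact ⟨U, fun _ => ⟨hU1, hU3, fun _ => hU2⟩⟩
      · obtain ⟨U, hU1, hU2⟩ :=
          Set.exists_subset_card_eq (s := Kc H c) (n := b) (by rw [Kc_ncard]; exact hb)
        exact ⟨U, fun _ => ⟨hU1, hU2, fun h => absurd h hc⟩⟩
    choose V hV using keyV
    set S : Set G := U₀ ∪ ⋃ c ∈ R \ {(1 : G ⧸ H)}, (V c ∪ (V c)⁻¹) with hS
    have hVsub : ∀ c : G ⧸ H, c ≠ 1 → V c ⊆ Kc H c := fun c h => (hV c h).1
    have hVisub : ∀ c : G ⧸ H, c ≠ 1 → (V c)⁻¹ ⊆ Kc H c⁻¹ := by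
      intro c h z hz
      rw [← Kc_inv]
      exact Set.mem_inv.2 (hVsub c h (Set.mem_inv.1 hz))
    have hKuniq : ∀ (z : G) (c d : G ⧸ H), z ∈ Kc H c → z ∈ Kc H d → c = d := by
      intro z c d h1 h2
      have h1' : (QuotientGroup.mk z : G ⧸ H) = c := h1
      have h2' : (QuotientGroup.mk z : G ⧸ H) = d := h2
      exact h1'.symm.trans h2'
    have hU₀H : U₀ ⊆ Kc H 1 := by rw [Kc_one]; exact hU₀sub.trans Set.diff_subset
    have hmem : ∀ z : G, z ∈ S ↔
        (z ∈ U₀ ∨ ∃ c, (c ∈ R ∧ c ≠ 1) ∧ z ∈ V c ∪ (V c)⁻¹) := by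
      intro z
      rw [hS]
      simp only [Set.mem_union, Set.mem_iUnion, Set.mem_diff, Set.mem_singleton_iff,
        exists_prop, Set.mem_inv]
    -- the three intersection computations
    have inter1 : S ∩ Kc H 1 = U₀ := by
      apply Set.Subset.antisymm
      · rintro z ⟨hzS, hzK⟩
        rcases (hmem z).1 hzS with hz | ⟨c, ⟨hcR, hc1⟩, hz⟩
        · exact hz
        · exfalso
          rcases hz with hz | hz
          · exact hc1 (hKuniq z c 1 (hVsub c hc1 hz) hzK)
          · have h := hKuniq z c⁻¹ 1 (hVisub c hc1 hz) hzK
            exact hc1 (by rwa [inv_eq_one] at h)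
      · intro z hz
        exact ⟨(hmem z).2 (Or.inl hz), hU₀H hz⟩
    have interR : ∀ d : G ⧸ H, d ≠ 1 → d ∈ R → S ∩ Kc H d = V d := by
      intro d hd1 hdR
      apply Set.Subset.antisymm
      · rintro z ⟨hzS, hzK⟩
        rcases (hmem z).1 hzS with hz | ⟨c, ⟨hcR, hc1⟩, hz⟩
        · exact absurd (hKuniq z 1 d (hU₀H hz) hzK).symm hd1
        · rcases hz with hz | hz
          · have : c = d := hKuniq z c d (hVsub c hc1 hz) hzK
            rwa [this] at hz
          · have hcd : c⁻¹ = d := hKuniq z c⁻¹ d (hVisub c hc1 hz) hzK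
            have hcc : c⁻¹ = c := hRself c hcR (hcd ▸ hdR)
            have hcd2 : c = d := hcc ▸ hcd
            rw [(hV c hc1).2.2 hcc] at hz
            rwa [hcd2] at hz
      · intro z hz
        exact ⟨(hmem z).2 (Or.inr ⟨d, ⟨hdR, hd1⟩, Or.inl hz⟩), hVsub d hd1 hz⟩
    have interNR : ∀ d : G ⧸ H, d ≠ 1 → d ∉ R → S ∩ Kc H d = (V d⁻¹)⁻¹ := by
      intro d hd1 hdR
      have hdiR : d⁻¹ ∈ R := (hRtot d).resolve_left hdR
      have hdi1 : d⁻¹ ≠ 1 := fun h => hd1 (by rwa [inv_eq_one] at h)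
      apply Set.Subset.antisymm
      · rintro z ⟨hzS, hzK⟩
        rcases (hmem z).1 hzS with hz | ⟨c, ⟨hcR, hc1⟩, hz⟩
        · exact absurd (hKuniq z 1 d (hU₀H hz) hzK).symm hd1
        · rcases hz with hz | hz
          · have : c = d := hKuniq z c d (hVsub c hc1 hz) hzK
            exact absurd (this ▸ hcR) hdR
          · have hcd : c⁻¹ = d := hKuniq z c⁻¹ d (hVisub c hc1 hz) hzK
            have : c = d⁻¹ := by rw [← hcd, inv_inv]
            rwa [this] at hz
      · intro z hz
        refine ⟨(hmem z).2 (Or.inr ⟨d⁻¹, ⟨hdiR, hdi1⟩, Or.inr hz⟩), ?_⟩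
        have := hVisub d⁻¹ hdi1 hz
        rwa [inv_inv] at this
    -- 1 ∉ S
    have hS1 : (1 : G) ∉ S := by
      intro h
      rcases (hmem 1).1 h with hz | ⟨c, ⟨hcR, hc1⟩, hz⟩
      · exact (hU₀sub hz).2 rfl
      · have h1K : (1 : G) ∈ Kc H 1 := by
          show (QuotientGroup.mk (1:G) : G ⧸ H) = 1
          exact QuotientGroup.mk_one H
        rcases hz with hz | hz
        · exact hc1 (hKuniq 1 c 1 (hVsub c hc1 hz) h1K)
        · have h := hKuniq 1 c⁻¹ 1 (hVisub c hc1 hz) h1K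
          exact hc1 (by rwa [inv_eq_one] at h)
    -- S is inverse-closed
    have swap : ∀ (A : Set G) (w : G), w⁻¹ ∈ A ∪ A⁻¹ ↔ w ∈ A ∪ A⁻¹ := by
      intro A w
      simp only [Set.mem_union, Set.mem_inv, inv_inv]
      tauto
    have hSinv : S⁻¹ = S := by
      ext z
      rw [Set.mem_inv, hmem, hmem]
      constructor
      · rintro (h | ⟨c, hc, h⟩)
        · left
          have := mem_of_inv_eq' hU₀inv h
          simpa using this
        · exact Or.inr ⟨c, hc, (swap (V c) z).1 h⟩
      · rintro (h | ⟨c, hc, h⟩)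
        · exact Or.inl (mem_of_inv_eq' hU₀inv h)
        · exact Or.inr ⟨c, hc, (swap (V c) z).2 h⟩
    refine ⟨S, hSinv, hS1, ?_, ?_⟩
    · intro v hv
      rw [count0 S hSinv hS1 v, (hq v).2 hv, inv_one, inter1, hU₀card]
    · intro v hv
      rw [count0 S hSinv hS1 v]
      set d : G ⧸ H := (QuotientGroup.mk v)⁻¹ with hd
      have hd1 : d ≠ 1 := by
        intro h
        rw [hd, inv_eq_one, hq] at h
        exact hv h
      by_cases hdR : d ∈ R
      · rw [interR d hd1 hdR]
        exact (hV d hd1).2.1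
      · rw [interNR d hd1 hdR, Set.ncard_inv]
        exact (hV d⁻¹ (fun h => hd1 (by rwa [inv_eq_one] at h)) ).2.1
  · intro h
    have hpos : 0 < Nat.card H := Nat.card_pos
    obtain ⟨k, hk⟩ := heven
    have hk1 : 1 ≤ k := by omega
    exact h 1 1 (by omega) (by omega)
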